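/- The product measure ν^{N,p}_φ is invariant for the zero-range generator: for every bounded function f : ℕ^{T^d_N} → ℝ one has ∫ 𝓛_N f dν^{N,p}_φ = 0. -/

import Mathlib

open scoped BigOperators
open MeasureTheory

/-- The "generalized factorial" `g(n)! = g(1)·g(2)···g(n)`, with `g(0)! = 1`. -/
noncomputable def gfact (g : ℕ → ℝ) (n : ℕ) : ℝ := ∏ i ∈ Finset.Icc 1 n, g i

/-- The partition function `Z(φ) = Σ_{n≥0} φⁿ/g(n)!`. -/
noncomputable def Zfun (g : ℕ → ℝ) (φ : ℝ) : ℝ := ∑' n : ℕ, φ ^ n / gfact g n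

/-- The one-site marginal `ν¹_φ(n) = φⁿ/(Z(φ)·g(n)!)`. -/
noncomputable def nu1 (g : ℕ → ℝ) (φ : ℝ) (n : ℕ) : ℝ := φ ^ n / (Zfun g φ * gfact g n)

/-- The one-site marginal `ν¹_φ` as a measure on `ℕ`. -/
noncomputable def nuM (g : ℕ → ℝ) (φ : ℝ) : Measure ℕ :=
  Measure.sum fun n => (ENNReal.ofReal (nu1 g φ n)) • Measure.dirac n

/-- Nearest neighbors on the discrete torus `T^d_N = (ℤ/Nℤ)^d`:
`x ∼ y` iff `y = x ± e_i` for some coordinate direction `i`. -/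
def nbr {d N : ℕ} (x y : Fin d → ZMod N) : Prop :=
  ∃ i : Fin d, y = x + Pi.single i 1 ∨ y = x - Pi.single i 1

/-- The configuration `η^{x,y}` obtained from `η` after one particle jumps from `x` to `y`. -/
def move {T : Type*} [DecidableEq T] (η : T → ℕ) (x y : T) : T → ℕ :=
  Function.update (Function.update η x (η x - 1)) y (η y + 1)

section OneSite
variable {g : ℕ → ℝ} {g₀ : ℝ} {φ' : ℝ}

lemma gfact_pos (hgpos : ∀ n, 1 ≤ n → 0 < g n) (n : ℕ) : 0 < gfact g n :=
  Finset.prod_pos fun i hi => hgpos i (Finset.mem_Icc.mp hi).1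

lemma gfact_succ (n : ℕ) : gfact g (n + 1) = gfact g n * g (n + 1) :=
  Finset.prod_Icc_succ_top (by omega) g

lemma gfact_ge (hg₀ : 0 < g₀) (hlin : ∀ n, g₀ * n ≤ g n) (n : ℕ) :
    g₀ ^ n * n.factorial ≤ gfact g n := by
  have h1 : (g₀ ^ n * n.factorial : ℝ) = ∏ i ∈ Finset.Icc 1 n, (g₀ * i) := by
    rw [Finset.prod_mul_distrib, Finset.prod_const, Nat.card_Icc]
    simp only [Nat.add_sub_cancel]
    congr 1
    rw [← Nat.cast_prod, ← Finset.Ico_add_one_right_eq_Icc, Finset.prod_Ico_id_eq_factorial]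
  rw [h1, gfact]
  apply Finset.prod_le_prod
  · intro i hi
    have : (1:ℝ) ≤ (i:ℝ) := by
      exact_mod_cast (Finset.mem_Icc.mp hi).1
    nlinarith
  · intro i _
    exact hlin i

lemma summable_Z (hg₀ : 0 < g₀) (hgpos : ∀ n, 1 ≤ n → 0 < g n)
    (hlin : ∀ n, g₀ * n ≤ g n) (hφ' : 0 ≤ φ') :
    Summable (fun n => φ' ^ n / gfact g n) := by
  apply Summable.of_nonneg_of_le
    (fun n => div_nonneg (pow_nonneg hφ' n) (gfact_pos hgpos n).le)
    (fun n => ?_) (Real.summable_pow_div_factorial (φ' / g₀))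
  have h1 : (0:ℝ) < g₀ ^ n * n.factorial := by positivity
  calc φ' ^ n / gfact g n ≤ φ' ^ n / (g₀ ^ n * n.factorial) :=
        by gcongr
           exact gfact_ge hg₀ hlin n
      _ = (φ' / g₀) ^ n / n.factorial := by
        rw [div_pow]; field_simp

lemma Z_pos (hg₀ : 0 < g₀) (hgpos : ∀ n, 1 ≤ n → 0 < g n)
    (hlin : ∀ n, g₀ * n ≤ g n) (hφ' : 0 ≤ φ') : 0 < Zfun g φ' := by
  have h0 : (fun n => φ' ^ n / gfact g n) 0 = 1 := by simp [gfact]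
  have := Summable.le_tsum (summable_Z hg₀ hgpos hlin hφ') 0
    (fun i _ => div_nonneg (pow_nonneg hφ' i) (gfact_pos hgpos i).le)
  simp only [h0] at this
  rw [Zfun]
  exact lt_of_lt_of_le one_pos this

lemma nu1_nonneg (hg₀ : 0 < g₀) (hgpos : ∀ n, 1 ≤ n → 0 < g n)
    (hlin : ∀ n, g₀ * n ≤ g n) (hφ' : 0 ≤ φ') (n : ℕ) : 0 ≤ nu1 g φ' n :=
  div_nonneg (pow_nonneg hφ' n) (mul_nonneg (Z_pos hg₀ hgpos hlin hφ').le (gfact_pos hgpos n).le)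

lemma nu1_succ (hg₀ : 0 < g₀) (hgpos : ∀ n, 1 ≤ n → 0 < g n)
    (hlin : ∀ n, g₀ * n ≤ g n) (hφ' : 0 ≤ φ') (n : ℕ) :
    g (n + 1) * nu1 g φ' (n + 1) = φ' * nu1 g φ' n := by
  have hZ : Zfun g φ' ≠ 0 := (Z_pos hg₀ hgpos hlin hφ').ne'
  have hgf : gfact g n ≠ 0 := (gfact_pos hgpos n).ne'
  have hg1 : g (n + 1) ≠ 0 := (hgpos (n+1) (by omega)).ne'
  rw [nu1, nu1, gfact_succ, pow_succ]
  field_simp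

lemma summable_nu1 (hg₀ : 0 < g₀) (hgpos : ∀ n, 1 ≤ n → 0 < g n)
    (hlin : ∀ n, g₀ * n ≤ g n) (hφ' : 0 ≤ φ') : Summable (nu1 g φ') := by
  have : nu1 g φ' = fun n => (φ' ^ n / gfact g n) * (Zfun g φ')⁻¹ := by
    funext n; rw [nu1]; ring
  rw [this]
  exact (summable_Z hg₀ hgpos hlin hφ').mul_right _

lemma tsum_nu1 (hg₀ : 0 < g₀) (hgpos : ∀ n, 1 ≤ n → 0 < g n)
    (hlin : ∀ n, g₀ * n ≤ g n) (hφ' : 0 ≤ φ') : ∑' n, nu1 g φ' n = 1 := by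
  have hZ : Zfun g φ' ≠ 0 := (Z_pos hg₀ hgpos hlin hφ').ne'
  have h : nu1 g φ' = fun n => (φ' ^ n / gfact g n) * (Zfun g φ')⁻¹ := by
    funext n; rw [nu1]; ring
  rw [h, tsum_mul_right, ← Zfun]
  field_simp

lemma summable_gnu (hg₀ : 0 < g₀) (hgpos : ∀ n, 1 ≤ n → 0 < g n)
    (hlin : ∀ n, g₀ * n ≤ g n) (hφ' : 0 ≤ φ') :
    Summable (fun n => g n * nu1 g φ' n) := by
  apply (summable_nat_add_iff 1).mp
  have : (fun n => g (n + 1) * nu1 g φ' (n + 1)) = fun n => φ' * nu1 g φ' n := by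
    funext n; exact nu1_succ hg₀ hgpos hlin hφ' n
  rw [this]
  exact (summable_nu1 hg₀ hgpos hlin hφ').mul_left _

lemma tsum_gnu (hg₀ : 0 < g₀) (hgzero : g 0 = 0) (hgpos : ∀ n, 1 ≤ n → 0 < g n)
    (hlin : ∀ n, g₀ * n ≤ g n) (hφ' : 0 ≤ φ') :
    ∑' n, g n * nu1 g φ' n = φ' := by
  rw [Summable.tsum_eq_zero_add (summable_gnu hg₀ hgpos hlin hφ')]
  simp only [hgzero, zero_mul, zero_add]
  have : (fun n => g (n + 1) * nu1 g φ' (n + 1)) = fun n => φ' * nu1 g φ' n := by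
    funext n; exact nu1_succ hg₀ hgpos hlin hφ' n
  rw [this, tsum_mul_left, tsum_nu1 hg₀ hgpos hlin hφ', mul_one]

lemma nuM_singleton (n : ℕ) : nuM g φ' {n} = ENNReal.ofReal (nu1 g φ' n) := by
  rw [nuM, Measure.sum_apply _ (measurableSet_singleton n)]
  rw [tsum_eq_single n]
  · simp
  · intro m hm
    simp [Measure.dirac_apply' _ (measurableSet_singleton n), Set.indicator, hm]

lemma nuM_prob (hg₀ : 0 < g₀) (hgpos : ∀ n, 1 ≤ n → 0 < g n)
    (hlin : ∀ n, g₀ * n ≤ g n) (hφ' : 0 ≤ φ') :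
    IsProbabilityMeasure (nuM g φ') := by
  constructor
  rw [nuM, Measure.sum_apply _ MeasurableSet.univ]
  simp only [Measure.smul_apply, Measure.dirac_apply_of_mem (Set.mem_univ _), smul_eq_mul, mul_one]
  rw [← ENNReal.ofReal_tsum_of_nonneg (nu1_nonneg hg₀ hgpos hlin hφ')
    (summable_nu1 hg₀ hgpos hlin hφ'), tsum_nu1 hg₀ hgpos hlin hφ']
  simp

end OneSite

section MoveNbr
variable {T : Type*} [DecidableEq T]

lemma move_apply_src {η : T → ℕ} {x y : T} (hxy : x ≠ y) : move η x y x = η x - 1 := by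
  rw [move, Function.update_of_ne hxy, Function.update_self]

lemma move_apply_tgt {η : T → ℕ} {x y : T} : move η x y y = η y + 1 := by
  rw [move, Function.update_self]

lemma move_apply_other {η : T → ℕ} {x y z : T} (hzx : z ≠ x) (hzy : z ≠ y) :
    move η x y z = η z := by
  rw [move, Function.update_of_ne hzy, Function.update_of_ne hzx]

lemma move_move {η : T → ℕ} {x y : T} (hxy : x ≠ y) (hx : 1 ≤ η x) :
    move (move η x y) y x = η := by
  funext z
  by_cases hzx : z = x
  · rw [hzx, move_apply_tgt, move_apply_src hxy]
    omega
  · by_cases hzy : z = y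
    · rw [hzy, move_apply_src (Ne.symm hxy), move_apply_tgt]
      omega
    · rw [move_apply_other hzy hzx, move_apply_other hzx hzy]

end MoveNbr

lemma nbr_ne {d N : ℕ} (hN : 2 ≤ N) {x y : Fin d → ZMod N} (h : nbr x y) : x ≠ y := by
  haveI : Fact (1 < N) := ⟨hN⟩
  have h10 : (1 : ZMod N) ≠ 0 := one_ne_zero
  obtain ⟨i, hi | hi⟩ := h <;> intro hxy <;> subst hxy
  · have := congrFun hi i
    simp only [Pi.add_apply, Pi.single_eq_same, left_eq_add] at this
    exact h10 this
  · have := congrFun hi i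
    simp only [Pi.sub_apply, Pi.single_eq_same, eq_sub_iff_add_eq, add_eq_left] at this
    exact h10 this

lemma nbr_symm {d N : ℕ} {x y : Fin d → ZMod N} (h : nbr x y) : nbr y x := by
  obtain ⟨i, hi | hi⟩ := h
  · exact ⟨i, Or.inr (by rw [hi]; ring)⟩
  · exact ⟨i, Or.inl (by rw [hi]; ring)⟩

lemma map_eval_pi' {X : Type*} [Fintype X] [DecidableEq X] (μs : X → Measure ℕ)
    [∀ x, IsProbabilityMeasure (μs x)] (x : X) :
    (Measure.pi μs).map (fun η => η x) = μs x := by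
  ext s hs
  rw [Measure.map_apply (measurable_pi_apply x) hs]
  have h1 : (fun η : X → ℕ => η x) ⁻¹' s = Set.pi Set.univ (fun j => if h : j = x then s else Set.univ) := by
    ext η
    simp only [Set.mem_preimage, Set.mem_pi, Set.mem_univ, forall_true_left]
    constructor
    · intro h j
      by_cases hj : j = x
      · subst hj; simpa using h
      · simp [hj]
    · intro h
      have := h x
      simpa using this
  rw [h1, Measure.pi_pi]
  rw [Finset.prod_eq_single x]
  · simp
  · intro j _ hj
    simp [hj]
  · simp



open Classical in
/-- The zero-range generator
`𝓛_N f(η) = Σ_{(x,y): x∼y} p_x·g(η(x))·(f(η^{x,y}) − f(η))`,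
the sum over ordered pairs of nearest neighbors (the term vanishes when `η(x)=0`
since `g(0)=0`). -/
noncomputable def gen {d N : ℕ} [NeZero N] (g : ℕ → ℝ) (p : (Fin d → ZMod N) → ℝ)
    (f : ((Fin d → ZMod N) → ℕ) → ℝ) (η : (Fin d → ZMod N) → ℕ) : ℝ :=
  ∑ x, ∑ y, if nbr x y then p x * g (η x) * (f (move η x y) - f η) else 0

/-- The product measure `ν^{N,p}_φ` is invariant for the zero-range generator:
for every bounded `f`, `∫ 𝓛_N f dν^{N,p}_φ = 0`. -/
theorem product_measure_invariant
    (g : ℕ → ℝ) (g₀ gstar : ℝ) (hg₀ : 0 < g₀) (hgs : g₀ ≤ gstar)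
    (hgzero : g 0 = 0) (hgpos : ∀ n, 1 ≤ n → 0 < g n)
    (hLip : ∀ n, |g (n + 1) - g n| ≤ gstar)
    (hlin : ∀ n, g₀ * n ≤ g n)
    (d N : ℕ) [NeZero N] (hN : 2 ≤ N)
    (a b : ℝ) (ha : 0 < a) (hab : a < b)
    (p : (Fin d → ZMod N) → ℝ) (hp : ∀ x, p x ∈ Set.Icc a b)
    (φ : ℝ) (hφ : 0 ≤ φ)
    (f : ((Fin d → ZMod N) → ℕ) → ℝ) (hf : ∃ C, ∀ η, |f η| ≤ C) :
    ∫ η, gen g p f η ∂(Measure.pi fun x => nuM g (φ / p x)) = 0 := by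
  classical
  obtain ⟨C0, hC0⟩ := hf
  set C := max C0 0 with hC
  have hC' : ∀ η, |f η| ≤ C := fun η => (hC0 η).trans (le_max_left _ _)
  have hCnn : (0:ℝ) ≤ C := le_max_right _ _
  have hpa : ∀ x, 0 < p x := fun x => lt_of_lt_of_le ha (hp x).1
  have hbnn : (0:ℝ) ≤ b := le_trans ha.le hab.le
  have hφp : ∀ x : Fin d → ZMod N, 0 ≤ φ / p x := fun x => div_nonneg hφ (hpa x).le
  haveI hprob : ∀ x : Fin d → ZMod N, IsProbabilityMeasure (nuM g (φ / p x)) :=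
    fun x => nuM_prob hg₀ hgpos hlin (hφp x)
  set μ : Measure ((Fin d → ZMod N) → ℕ) := Measure.pi fun x => nuM g (φ / p x) with hμ
  set W : (Fin d → ZMod N) → ℕ → ℝ := fun z n => nu1 g (φ / p z) n with hWdef
  set wr : ((Fin d → ZMod N) → ℕ) → ℝ := fun η => ∏ z, W z (η z) with hwrdef
  have hWnn : ∀ z n, 0 ≤ W z n := fun z n => nu1_nonneg hg₀ hgpos hlin (hφp z) n
  have hwrnn : ∀ η, 0 ≤ wr η := fun η => Finset.prod_nonneg fun z _ => hWnn z (η z)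
  have hgnn : ∀ n, 0 ≤ g n := by
    intro n
    rcases Nat.eq_zero_or_pos n with h | h
    · rw [h, hgzero]
    · exact (hgpos n h).le
  -- singleton measure
  have hsing : ∀ η, μ {η} = ∏ z, ENNReal.ofReal (W z (η z)) := by
    intro η
    have h1 : ({η} : Set ((Fin d → ZMod N) → ℕ)) = Set.pi Set.univ (fun z => {η z}) := by
      ext ζ
      simp [Set.mem_pi, funext_iff]
    rw [hμ, h1, Measure.pi_pi]
    exact Finset.prod_congr rfl fun z _ => nuM_singleton (η z)
  have hwrt : ∀ η, (μ {η}).toReal = wr η := by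
    intro η
    rw [hsing, ENNReal.toReal_prod]
    exact Finset.prod_congr rfl fun z _ => ENNReal.toReal_ofReal (hWnn z (η z))
  -- single-site balance
  have hpW : ∀ (z : Fin d → ZMod N) (n : ℕ), p z * (g (n + 1) * W z (n + 1)) = φ * W z n := by
    intro z n
    show p z * (g (n + 1) * nu1 g (φ / p z) (n + 1)) = φ * nu1 g (φ / p z) n
    rw [nu1_succ hg₀ hgpos hlin (hφp z) n, ← mul_assoc, mul_comm (p z) (φ / p z),
      div_mul_cancel₀ _ (hpa z).ne']
  -- product splitting
  have hsplit : ∀ (u : (Fin d → ZMod N) → ℕ) (x y : Fin d → ZMod N), x ≠ y →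
      wr u = W x (u x) * (W y (u y) * ∏ z ∈ (Finset.univ.erase x).erase y, W z (u z)) := by
    intro u x y hxy
    rw [hwrdef]
    simp only
    rw [← Finset.mul_prod_erase Finset.univ _ (Finset.mem_univ x)]
    congr 1
    rw [← Finset.mul_prod_erase _ _ (Finset.mem_erase.mpr ⟨Ne.symm hxy, Finset.mem_univ y⟩)]
  -- the key weight identity
  have hkey : ∀ (x y : Fin d → ZMod N), x ≠ y → ∀ ζ : (Fin d → ZMod N) → ℕ, 1 ≤ ζ y →
      wr (move ζ y x) * (p x * g (ζ x + 1)) = wr ζ * (p y * g (ζ y)) := by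
    intro x y hxy ζ hζ
    obtain ⟨m, hm⟩ : ∃ m, ζ y = m + 1 := ⟨ζ y - 1, by omega⟩
    have e1 : move ζ y x x = ζ x + 1 := move_apply_tgt
    have e2 : move ζ y x y = m := by
      rw [move_apply_src (Ne.symm hxy), hm]
      omega
    have eR : ∏ z ∈ (Finset.univ.erase x).erase y, W z (move ζ y x z)
        = ∏ z ∈ (Finset.univ.erase x).erase y, W z (ζ z) := by
      refine Finset.prod_congr rfl fun z hz => ?_
      obtain ⟨hzy, hz2⟩ := Finset.mem_erase.mp hz
      obtain ⟨hzx, _⟩ := Finset.mem_erase.mp hz2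
      rw [move_apply_other hzy hzx]
    rw [hsplit (move ζ y x) x y hxy, hsplit ζ x y hxy, e1, e2, eR, hm]
    linear_combination (W y m * (∏ z ∈ (Finset.univ.erase x).erase y, W z (ζ z))) * hpW x (ζ x)
      - (W x (ζ x) * (∏ z ∈ (Finset.univ.erase x).erase y, W z (ζ z))) * hpW y m
  -- the coordinate moment
  have hlint : ∀ x : Fin d → ZMod N,
      ∫⁻ η, ENNReal.ofReal (g (η x)) ∂μ = ENNReal.ofReal (φ / p x) := by
    intro x
    have hm : Measurable (fun n : ℕ => ENNReal.ofReal (g n)) := measurable_of_countable _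
    have h1 : ∫⁻ η, ENNReal.ofReal (g (η x)) ∂μ
        = ∫⁻ n, ENNReal.ofReal (g n) ∂(μ.map (fun η => η x)) :=
      (lintegral_map hm (measurable_pi_apply x)).symm
    rw [h1, hμ, map_eval_pi', lintegral_countable']
    have h2 : ∀ n : ℕ, ENNReal.ofReal (g n) * (nuM g (φ / p x)) {n}
        = ENNReal.ofReal (g n * nu1 g (φ / p x) n) := by
      intro n
      rw [nuM_singleton, ← ENNReal.ofReal_mul (hgnn n)]
    simp only [h2]
    rw [← ENNReal.ofReal_tsum_of_nonneg
      (fun n => mul_nonneg (hgnn n) (nu1_nonneg hg₀ hgpos hlin (hφp x) n))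
      (summable_gnu hg₀ hgpos hlin (hφp x)),
      tsum_gnu hg₀ hgzero hgpos hlin (hφp x)]
  -- summability of the dominating weight over configurations
  have hSg : ∀ x : Fin d → ZMod N, Summable (fun η : (Fin d → ZMod N) → ℕ => wr η * g (η x)) := by
    intro x
    have h1 : ∑' η : (Fin d → ZMod N) → ℕ, (μ {η} * ENNReal.ofReal (g (η x))) ≠ ⊤ := by
      have h2 : (fun η : (Fin d → ZMod N) → ℕ => μ {η} * ENNReal.ofReal (g (η x)))
          = fun η => ENNReal.ofReal (g (η x)) * μ {η} := funext fun η => mul_comm _ _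
      rw [h2, ← lintegral_countable' (fun η => ENNReal.ofReal (g (η x))) (μ := μ), hlint x]
      exact ENNReal.ofReal_ne_top
    have h2 := ENNReal.summable_toReal h1
    have h3 : (fun η : (Fin d → ZMod N) → ℕ => (μ {η} * ENNReal.ofReal (g (η x))).toReal)
        = fun η => wr η * g (η x) := by
      funext η
      rw [ENNReal.toReal_mul, hwrt, ENNReal.toReal_ofReal (hgnn _)]
    rw [h3] at h2
    exact h2
  -- generic summability of bounded-by-weight families
  have hSb : ∀ (x : Fin d → ZMod N) (K : ℝ) (F : ((Fin d → ZMod N) → ℕ) → ℝ),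
      (∀ η, |F η| ≤ wr η * g (η x) * K) → Summable F := by
    intro x K F hF
    rw [← summable_abs_iff]
    exact Summable.of_nonneg_of_le (fun η => abs_nonneg _) hF ((hSg x).mul_right K)
  -- pointwise bounds
  have hbound : ∀ (x : Fin d → ZMod N) (η : (Fin d → ZMod N) → ℕ) (r K : ℝ), |r| ≤ K →
      |wr η * (p x * g (η x) * r)| ≤ wr η * g (η x) * (b * K) := by
    intro x η r K hr
    have h1 : p x * |r| ≤ b * K := mul_le_mul (hp x).2 hr (abs_nonneg _) hbnn
    calc |wr η * (p x * g (η x) * r)| = wr η * g (η x) * (p x * |r|) := by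
          rw [abs_mul, abs_mul, abs_mul, abs_of_nonneg (hwrnn η),
            abs_of_nonneg (hpa x).le, abs_of_nonneg (hgnn _)]
          ring
      _ ≤ wr η * g (η x) * (b * K) :=
          mul_le_mul_of_nonneg_left h1 (mul_nonneg (hwrnn η) (hgnn _))
  -- integrability of the generator
  have hgenint : Integrable (gen g p f) μ := by
    have hsum : ∀ x : Fin d → ZMod N, Integrable (fun η : (Fin d → ZMod N) → ℕ => g (η x)) μ := by
      intro x
      refine ⟨(measurable_of_countable _).aestronglyMeasurable, ?_⟩
      rw [hasFiniteIntegral_iff_norm]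
      have h1 : ∀ η : (Fin d → ZMod N) → ℕ, ENNReal.ofReal ‖g (η x)‖ = ENNReal.ofReal (g (η x)) :=
        fun η => by rw [Real.norm_of_nonneg (hgnn _)]
      simp only [h1]
      rw [hlint x]
      exact ENNReal.ofReal_lt_top
    have hterm : ∀ x y : Fin d → ZMod N, Integrable
        (fun η : (Fin d → ZMod N) → ℕ =>
          if nbr x y then p x * g (η x) * (f (move η x y) - f η) else 0) μ := by
      intro x y
      by_cases hxy : nbr x y
      · simp only [hxy, if_true]
        apply Integrable.mono' ((hsum x).const_mul (b * (2 * C)))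
          (measurable_of_countable _).aestronglyMeasurable
        apply Filter.Eventually.of_forall
        intro η
        have h2 : |f (move η x y) - f η| ≤ 2 * C := by
          have := hC' (move η x y); have := hC' η
          calc |f (move η x y) - f η| ≤ |f (move η x y)| + |f η| := abs_sub _ _
            _ ≤ 2 * C := by linarith
        rw [Real.norm_eq_abs, abs_mul, abs_mul, abs_of_nonneg (hpa x).le, abs_of_nonneg (hgnn _)]
        calc p x * g (η x) * |f (move η x y) - f η| ≤ b * g (η x) * (2 * C) := by
              apply mul_le_mul (mul_le_mul (hp x).2 le_rfl (hgnn _) hbnn) h2 (abs_nonneg _)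
              exact mul_nonneg hbnn (hgnn _)
          _ = b * (2 * C) * g (η x) := by ring
      · simp only [hxy, if_false]
        exact integrable_zero _ _ _
    have : gen g p f = fun η => ∑ x : Fin d → ZMod N, ∑ y : Fin d → ZMod N,
        (if nbr x y then p x * g (η x) * (f (move η x y) - f η) else 0) := rfl
    rw [this]
    exact integrable_finset_sum _ fun x _ => integrable_finset_sum _ fun y _ => hterm x y
  -- the per-site quantity
  set A : (Fin d → ZMod N) → ℝ :=
    fun z => ∑' η : (Fin d → ZMod N) → ℕ, wr η * (p z * g (η z) * f η) with hAdef
  have hSA : ∀ x : Fin d → ZMod N,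
      Summable (fun η : (Fin d → ZMod N) → ℕ => wr η * (p x * g (η x) * f η)) :=
    fun x => hSb x (b * C) _ (fun η => hbound x η (f η) C (hC' η))
  have hSmove : ∀ x y : Fin d → ZMod N,
      Summable (fun η : (Fin d → ZMod N) → ℕ => wr η * (p x * g (η x) * f (move η x y))) :=
    fun x y => hSb x (b * C) _ (fun η => hbound x η _ C (hC' _))
  have hdiff : ∀ (x y : Fin d → ZMod N) (η : (Fin d → ZMod N) → ℕ),
      |f (move η x y) - f η| ≤ 2 * C := by
    intro x y η
    have h1 := hC' (move η x y); have h2 := hC' η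
    calc |f (move η x y) - f η| ≤ |f (move η x y)| + |f η| := abs_sub _ _
      _ ≤ 2 * C := by linarith
  -- change of variables η ↦ η^{x,y}
  have hchg : ∀ x y : Fin d → ZMod N, nbr x y →
      (∑' η : (Fin d → ZMod N) → ℕ, wr η * (p x * g (η x) * f (move η x y))) = A y := by
    intro x y hn
    have hxy : x ≠ y := nbr_ne hN hn
    have hsupp : ∀ ζ : (Fin d → ZMod N) → ℕ,
        wr ζ * (p y * g (ζ y) * f ζ) ≠ 0 → 1 ≤ ζ y := by
      intro ζ h
      by_contra hc
      apply h
      have h0 : ζ y = 0 := by omega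
      rw [h0, hgzero]
      ring
    have hinv : ∀ ζ : (Fin d → ZMod N) → ℕ, 1 ≤ ζ y → move (move ζ y x) x y = ζ :=
      fun ζ h => move_move (Ne.symm hxy) h
    apply tsum_eq_tsum_of_ne_zero_bij
      (fun ζ : Function.support (fun ζ : (Fin d → ZMod N) → ℕ =>
        wr ζ * (p y * g (ζ y) * f ζ)) => move ζ.1 y x)
    · intro ζ1 ζ2 h12
      have e1 := hinv ζ1.1 (hsupp ζ1.1 ζ1.2)
      have e2 := hinv ζ2.1 (hsupp ζ2.1 ζ2.2)
      have := congrArg (fun u => move u x y) h12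
      simp only at this
      rw [e1, e2] at this
      exact Subtype.ext this
    · intro η hη
      have hηx : 1 ≤ η x := by
        by_contra hc
        apply hη
        have h0 : η x = 0 := by omega
        simp only [Function.mem_support] at *
        rw [h0, hgzero]
        ring
      have hζy : move η x y y = η y + 1 := move_apply_tgt
      have hmv : move (move η x y) y x = η := move_move hxy hηx
      have hζx : move η x y x + 1 = η x := by
        rw [move_apply_src hxy]
        omega
      have hky := hkey x y hxy (move η x y) (by omega)
      rw [hmv, hζx] at hky
      have hGF : wr (move η x y) * (p y * g (move η x y y) * f (move η x y))
          = wr η * (p x * g (η x) * f (move η x y)) := by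
        linear_combination (f (move η x y)) * hky.symm
      refine ⟨⟨move η x y, ?_⟩, hmv⟩
      simp only [Function.mem_support] at *
      rw [hGF]
      exact hη
    · intro ζ
      have h1 : 1 ≤ ζ.1 y := hsupp ζ.1 ζ.2
      have hky := hkey x y hxy ζ.1 h1
      show wr (move ζ.1 y x) * (p x * g (move ζ.1 y x x) * f (move (move ζ.1 y x) x y)) = _
      rw [move_apply_tgt, hinv ζ.1 h1]
      linear_combination (f ζ.1) * hky
  -- summability of the pair terms
  have hSq : ∀ x y : Fin d → ZMod N, Summable (fun η : (Fin d → ZMod N) → ℕ =>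
      wr η * (if nbr x y then p x * g (η x) * (f (move η x y) - f η) else 0)) := by
    intro x y
    by_cases hn : nbr x y
    · simp only [hn, if_true]
      exact hSb x (b * (2 * C)) _ (fun η => hbound x η _ (2 * C) (hdiff x y η))
    · simp only [hn, if_false, mul_zero]
      exact summable_zero
  -- value of each pair term
  have hpair : ∀ x y : Fin d → ZMod N,
      (∑' η : (Fin d → ZMod N) → ℕ,
        wr η * (if nbr x y then p x * g (η x) * (f (move η x y) - f η) else 0))
      = if nbr x y then A y - A x else 0 := by
    intro x y
    by_cases hn : nbr x y
    · simp only [hn, if_true]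
      have h1 : (fun η : (Fin d → ZMod N) → ℕ =>
            wr η * (p x * g (η x) * (f (move η x y) - f η)))
          = fun η => wr η * (p x * g (η x) * f (move η x y))
              - wr η * (p x * g (η x) * f η) := by
        funext η; ring
      rw [h1, Summable.tsum_sub (hSmove x y) (hSA x), hchg x y hn]
    · simp [hn]
  -- assembly
  rw [integral_countable' hgenint]
  have hterm2 : ∀ η : (Fin d → ZMod N) → ℕ, (μ {η}).toReal • gen g p f η
      = ∑ x : Fin d → ZMod N, ∑ y : Fin d → ZMod N,
        wr η * (if nbr x y then p x * g (η x) * (f (move η x y) - f η) else 0) := by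
    intro η
    rw [smul_eq_mul, hwrt]
    show wr η * (∑ x : Fin d → ZMod N, ∑ y : Fin d → ZMod N,
        if nbr x y then p x * g (η x) * (f (move η x y) - f η) else 0) = _
    rw [Finset.mul_sum]
    exact Finset.sum_congr rfl fun x _ => Finset.mul_sum _ _ _
  simp only [measureReal_def, hterm2]
  rw [Summable.tsum_finsetSum (fun x _ => summable_sum (fun y _ => hSq x y))]
  have hswap : ∀ x : Fin d → ZMod N,
      (∑' η : (Fin d → ZMod N) → ℕ, ∑ y : Fin d → ZMod N,
        wr η * (if nbr x y then p x * g (η x) * (f (move η x y) - f η) else 0))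
      = ∑ y : Fin d → ZMod N, (if nbr x y then A y - A x else 0) := by
    intro x
    rw [Summable.tsum_finsetSum (fun y _ => hSq x y)]
    exact Finset.sum_congr rfl fun y _ => hpair x y
  simp only [hswap]
  have hsplit2 : ∀ x y : Fin d → ZMod N, (if nbr x y then A y - A x else 0)
      = (if nbr x y then A y else 0) - (if nbr x y then A x else 0) := by
    intro x y
    by_cases hn : nbr x y <;> simp [hn]
  simp only [hsplit2, Finset.sum_sub_distrib]
  rw [sub_eq_zero]
  rw [Finset.sum_comm]
  apply Finset.sum_congr rfl
  intro x _
  apply Finset.sum_congr rfl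
  intro y _
  exact if_congr ⟨nbr_symm, nbr_symm⟩ rfl rfl
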